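/- Let μ > 0. Then as E → 0⁺, ∫_{−E}^{E} 1/(A₁(E,y)·A₂(E,y)) dy = E/(2μ²) − E³/(6μ⁴) + 19·E⁵/(240μ⁶) − 13·E⁷/(280μ⁸) + O(E⁸). -/

import Mathlib

open Real Filter Asymptotics Topology MeasureTheory

noncomputable def A1 (μ x y : ℝ) : ℝ := Real.sqrt ((x + y)^2 + 4*μ^2)
noncomputable def A2 (μ x y : ℝ) : ℝ := Real.sqrt ((x - y)^2 + 4*μ^2)

noncomputable def nm (a u v : ℝ) : ℝ :=
  a^3 - a^2*(u+v) + a*(u^2+4*u*v+v^2) - (u^3+9*u^2*v+9*u*v^2+v^3)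

noncomputable def Qq (a u v : ℝ) : ℝ := a^2 + 2*a*(u+v) + (u-v)^2

lemma mb {u v a : ℝ} (hv : 0 ≤ v) (hvu : v ≤ u) (hua : u ≤ a)
    (i j k d : ℕ) (h1 : i + j = 4 + d) (h2 : d + k = 4) :
    0 ≤ u^i * v^j * a^k ∧ u^i * v^j * a^k ≤ u^4 * a^4 := by
  have hu : 0 ≤ u := hv.trans hvu
  have ha : 0 ≤ a := hu.trans hua
  constructor
  · positivity
  · have huu : u^i * u^j = u^4 * u^d := by rw [← pow_add, ← pow_add, h1]
    calc u^i * v^j * a^k ≤ u^i * u^j * a^k := by gcongr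
      _ = u^4 * u^d * a^k := by rw [huu]
      _ ≤ u^4 * a^d * a^k := by gcongr
      _ = u^4 * a^4 := by rw [mul_assoc, ← pow_add, h2]

lemma Rident (u v a : ℝ) :
    a^8 - (nm a u v)^2 * (Qq a u v) = (2) * (u^0 * v^4 * a^4) + (-1) * (u^0 * v^8 * a^0) + (32) * (u^1 * v^3 * a^4) + (-16) * (u^1 * v^4 * a^3) + (16) * (u^1 * v^5 * a^2) + (-16) * (u^1 * v^6 * a^1) + (-16) * (u^1 * v^7 * a^0) + (72) * (u^2 * v^2 * a^4) + (-96) * (u^2 * v^3 * a^3) + (136) * (u^2 * v^4 * a^2) + (-192) * (u^2 * v^5 * a^1) + (-64) * (u^2 * v^6 * a^0) + (32) * (u^3 * v^1 * a^4) + (-96) * (u^3 * v^2 * a^3) + (256) * (u^3 * v^3 * a^2) + (-592) * (u^3 * v^4 * a^1) + (16) * (u^3 * v^5 * a^0) + (2) * (u^4 * v^0 * a^4) + (-16) * (u^4 * v^1 * a^3) + (136) * (u^4 * v^2 * a^2) + (-592) * (u^4 * v^3 * a^1) + (130) * (u^4 * v^4 * a^0) + (16) * (u^5 * v^1 * a^2)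 + (-192) * (u^5 * v^2 * a^1) + (16) * (u^5 * v^3 * a^0) + (-16) * (u^6 * v^1 * a^1) + (-64) * (u^6 * v^2 * a^0) + (-16) * (u^7 * v^1 * a^0) + (-1) * (u^8 * v^0 * a^0) := by
  unfold nm Qq; ring

lemma Rbound {u v a : ℝ} (hv : 0 ≤ v) (hvu : v ≤ u) (hua : u ≤ a) :
    |a^8 - (nm a u v)^2 * (Qq a u v)| ≤ 1986 * (u^4 * a^4) := by
  have m1 := mb hv hvu hua 0 4 4 0 (by norm_num) (by norm_num)
  have m2 := mb hv hvu hua 0 8 0 4 (by norm_num) (by norm_num)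
  have m3 := mb hv hvu hua 1 3 4 0 (by norm_num) (by norm_num)
  have m4 := mb hv hvu hua 1 4 3 1 (by norm_num) (by norm_num)
  have m5 := mb hv hvu hua 1 5 2 2 (by norm_num) (by norm_num)
  have m6 := mb hv hvu hua 1 6 1 3 (by norm_num) (by norm_num)
  have m7 := mb hv hvu hua 1 7 0 4 (by norm_num) (by norm_num)
  have m8 := mb hv hvu hua 2 2 4 0 (by norm_num) (by norm_num)
  have m9 := mb hv hvu hua 2 3 3 1 (by norm_num) (by norm_num)
  have m10 := mb hv hvu hua 2 4 2 2 (by norm_num) (by norm_num)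
  have m11 := mb hv hvu hua 2 5 1 3 (by norm_num) (by norm_num)
  have m12 := mb hv hvu hua 2 6 0 4 (by norm_num) (by norm_num)
  have m13 := mb hv hvu hua 3 1 4 0 (by norm_num) (by norm_num)
  have m14 := mb hv hvu hua 3 2 3 1 (by norm_num) (by norm_num)
  have m15 := mb hv hvu hua 3 3 2 2 (by norm_num) (by norm_num)
  have m16 := mb hv hvu hua 3 4 1 3 (by norm_num) (by norm_num)
  have m17 := mb hv hvu hua 3 5 0 4 (by norm_num) (by norm_num)
  have m18 := mb hv hvu hua 4 0 4 0 (by norm_num) (by norm_num)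
  have m19 := mb hv hvu hua 4 1 3 1 (by norm_num) (by norm_num)
  have m20 := mb hv hvu hua 4 2 2 2 (by norm_num) (by norm_num)
  have m21 := mb hv hvu hua 4 3 1 3 (by norm_num) (by norm_num)
  have m22 := mb hv hvu hua 4 4 0 4 (by norm_num) (by norm_num)
  have m23 := mb hv hvu hua 5 1 2 2 (by norm_num) (by norm_num)
  have m24 := mb hv hvu hua 5 2 1 3 (by norm_num) (by norm_num)
  have m25 := mb hv hvu hua 5 3 0 4 (by norm_num) (by norm_num)
  have m26 := mb hv hvu hua 6 1 1 3 (by norm_num) (by norm_num)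
  have m27 := mb hv hvu hua 6 2 0 4 (by norm_num) (by norm_num)
  have m28 := mb hv hvu hua 7 1 0 4 (by norm_num) (by norm_num)
  have m29 := mb hv hvu hua 8 0 0 4 (by norm_num) (by norm_num)
  rw [abs_le, Rident]
  constructor <;> linarith

lemma A1A2 (μ E y : ℝ) :
    A1 μ E y * A2 μ E y = Real.sqrt (Qq (4*μ^2) (E^2) (y^2)) := by
  unfold A1 A2 Qq
  rw [← Real.sqrt_mul (by positivity)]
  congr 1
  ring

lemma pointwise {μ E y : ℝ} (hμ : 0 < μ) (hE : 0 < E) (hEμ : E ≤ μ) (hy : y^2 ≤ E^2) :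
    |1/(A1 μ E y * A2 μ E y) - nm (4*μ^2) (E^2) (y^2) / (4*μ^2)^4|
      ≤ 1986 * E^8 / (4*μ^2)^5 := by
  set a : ℝ := 4*μ^2 with ha_def
  set u : ℝ := E^2 with hu_def
  set v : ℝ := y^2 with hv_def
  have ha : 0 < a := by positivity
  have hv : 0 ≤ v := sq_nonneg y
  have hvu : v ≤ u := hy
  have hu : 0 < u := by positivity
  have hua4 : 4*u ≤ a := by rw [hu_def, ha_def]; nlinarith
  have hua : u ≤ a := by linarith
  have hQpos : 0 < Qq a u v := by unfold Qq; nlinarith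
  have hQle : Qq a u v ≤ 4*a^2 := by unfold Qq; nlinarith
  have hQge : a^2 ≤ Qq a u v := by unfold Qq; nlinarith
  set s : ℝ := Real.sqrt (Qq a u v) with hs_def
  have hs0 : 0 < s := Real.sqrt_pos.mpr hQpos
  have hs2 : s^2 = Qq a u v := Real.sq_sqrt hQpos.le
  have hsa : a ≤ s := by
    have h := Real.sqrt_le_sqrt hQge
    rw [Real.sqrt_sq ha.le] at h
    rw [hs_def]
    exact h
  have hnum : 0 < nm a u v := by
    unfold nm
    have hd : 0 ≤ u - v := by linarith
    have k1 : 0 ≤ a^2 * (a - 4*u) := mul_nonneg (by positivity) (by linarith)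
    have k2 : 0 ≤ a^2 * (u - v) := mul_nonneg (by positivity) hd
    have k3 : 0 ≤ u^2 * (u - v) := mul_nonneg (by positivity) hd
    have k4 : 0 ≤ u*v * (u - v) := mul_nonneg (by positivity) hd
    have k5 : 0 ≤ v^2 * (u - v) := mul_nonneg (by positivity) hd
    have k6 : 0 ≤ u * ((a - 4*u)*(a + 4*u)) :=
      mul_nonneg hu.le (mul_nonneg (by linarith) (by linarith))
    have k7 : 0 ≤ a * (u^2+4*u*v+v^2) := mul_nonneg ha.le (by positivity)
    have k8 : 0 < a^2 * u := by positivity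
    nlinarith [k1, k2, k3, k4, k5, k6, k7, k8]
  set D : ℝ := a^4 * s * (a^4 + nm a u v * s) with hD_def
  have hD : 0 < D := by
    apply mul_pos (by positivity)
    positivity
  have hD9 : a^9 ≤ D := by
    have h1 : (0:ℝ) ≤ nm a u v * s := mul_nonneg hnum.le hs0.le
    calc a^9 = (a^4 * a) * a^4 := by ring
      _ ≤ (a^4 * s) * a^4 := by gcongr
      _ ≤ (a^4 * s) * (a^4 + nm a u v * s) := by
          apply mul_le_mul_of_nonneg_left (by linarith) (by positivity)
      _ = D := by rw [hD_def]
  have key : (1/s - nm a u v / a^4) * D = a^8 - (nm a u v)^2 * Qq a u v := by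
    rw [← hs2, hD_def]
    field_simp
    ring
  have hx : 1/s - nm a u v / a^4 = (a^8 - (nm a u v)^2 * Qq a u v) / D :=
    (eq_div_iff hD.ne').mpr key
  rw [A1A2, ← hs_def, hx, abs_div, abs_of_pos hD]
  calc |a^8 - (nm a u v)^2 * Qq a u v| / D ≤ 1986 * (u^4 * a^4) / a^9 := by
        apply div_le_div₀ (by positivity) (Rbound hv hvu hua) (by positivity) hD9
    _ = 1986 * E^8 / a^5 := by
        rw [hu_def]
        field_simp

theorem stmt13 (μ : ℝ) (hμ : 0 < μ) :
    (fun E => (∫ y in (-E)..E, 1 / (A1 μ E y * A2 μ E y))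
        - (E/(2*μ^2) - E^3/(6*μ^4) + 19*E^5/(240*μ^6) - 13*E^7/(280*μ^8)))
      =O[𝓝[>] (0:ℝ)] fun E => E^8 := by
  rw [isBigO_iff]
  refine ⟨3972 * μ / (4*μ^2)^5, ?_⟩
  filter_upwards [Ioc_mem_nhdsGT_of_mem (Set.mem_Ico.mpr ⟨le_refl (0:ℝ), hμ⟩)] with E hE
  obtain ⟨hE0, hEμ⟩ := hE
  set a : ℝ := 4*μ^2 with ha_def
  have ha : 0 < a := by positivity
  -- continuity of integrand
  have hA1c : Continuous fun y => A1 μ E y := by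
    unfold A1; exact Real.continuous_sqrt.comp (by continuity)
  have hA2c : Continuous fun y => A2 μ E y := by
    unfold A2; exact Real.continuous_sqrt.comp (by continuity)
  have hApos : ∀ y : ℝ, 0 < A1 μ E y * A2 μ E y := by
    intro y
    unfold A1 A2
    exact mul_pos (Real.sqrt_pos.mpr (by positivity)) (Real.sqrt_pos.mpr (by positivity))
  have hfc : Continuous fun y => 1 / (A1 μ E y * A2 μ E y) :=
    continuous_const.div (hA1c.mul hA2c) fun y => (hApos y).ne'
  have hfi : IntervalIntegrable (fun y => 1 / (A1 μ E y * A2 μ E y)) volume (-E) E :=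
    hfc.intervalIntegrable _ _
  -- the polynomial approximant
  set u : ℝ := E^2 with hu_def
  set c0 : ℝ := (a^3 - a^2*u + a*u^2 - u^3)/a^4 with hc0
  set c1 : ℝ := (-a^2 + 4*a*u - 9*u^2)/a^4 with hc1
  set c2 : ℝ := (a - 9*u)/a^4 with hc2
  set c3 : ℝ := (-1 : ℝ)/a^4 with hc3
  have hPeq : ∀ y : ℝ, nm a (E^2) (y^2) / a^4 = c0 + c1*y^2 + c2*y^4 + c3*y^6 := by
    intro y
    rw [hc0, hc1, hc2, hc3, ← hu_def]
    unfold nm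
    field_simp
    ring
  have hPi : IntervalIntegrable (fun y => nm a (E^2) (y^2) / a^4) volume (-E) E :=
    Continuous.intervalIntegrable (by unfold nm; fun_prop) _ _
  have hderiv : ∀ x ∈ Set.uIcc (-E) E, HasDerivAt
      (fun y : ℝ => c0*y + c1*y^3/3 + c2*y^5/5 + c3*y^7/7)
      (c0 + c1*x^2 + c2*x^4 + c3*x^6) x := by
    intro x _
    have h1 : HasDerivAt (fun y : ℝ => y) 1 x := hasDerivAt_id x
    have h3 : HasDerivAt (fun y : ℝ => y^3) (3*x^2) x := by
      simpa using hasDerivAt_pow 3 x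
    have h5 : HasDerivAt (fun y : ℝ => y^5) (5*x^4) x := by
      simpa using hasDerivAt_pow 5 x
    have h7 : HasDerivAt (fun y : ℝ => y^7) (7*x^6) x := by
      simpa using hasDerivAt_pow 7 x
    have := (((h1.const_mul c0).add ((h3.const_mul c1).div_const 3)).add
      ((h5.const_mul c2).div_const 5)).add ((h7.const_mul c3).div_const 7)
    refine this.congr_deriv ?_
    ring
  have hPint : (∫ y in (-E)..E, nm a (E^2) (y^2) / a^4)
      = E/(2*μ^2) - E^3/(6*μ^4) + 19*E^5/(240*μ^6) - 13*E^7/(280*μ^8) := by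
    have h1 : (∫ y in (-E)..E, nm a (E^2) (y^2) / a^4)
        = ∫ y in (-E)..E, (c0 + c1*y^2 + c2*y^4 + c3*y^6) := by
      apply intervalIntegral.integral_congr
      intro y _
      exact hPeq y
    rw [h1, intervalIntegral.integral_eq_sub_of_hasDerivAt hderiv
      (Continuous.intervalIntegrable (by fun_prop) _ _)]
    rw [hc0, hc1, hc2, hc3, hu_def, ha_def]
    have hμ' : μ ≠ 0 := hμ.ne'
    field_simp
    ring
  have hsplit : (∫ y in (-E)..E, 1 / (A1 μ E y * A2 μ E y))
      - (E/(2*μ^2) - E^3/(6*μ^4) + 19*E^5/(240*μ^6) - 13*E^7/(280*μ^8))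
      = ∫ y in (-E)..E, (1 / (A1 μ E y * A2 μ E y) - nm a (E^2) (y^2) / a^4) := by
    rw [intervalIntegral.integral_sub hfi hPi, hPint]
  rw [hsplit]
  have hbound : ∀ y ∈ Set.uIoc (-E) E,
      ‖1 / (A1 μ E y * A2 μ E y) - nm a (E^2) (y^2) / a^4‖ ≤ 1986 * E^8 / a^5 := by
    intro y hy
    rw [Set.uIoc_of_le (by linarith : -E ≤ E)] at hy
    have hy2 : y^2 ≤ E^2 := sq_le_sq' (le_of_lt hy.1) hy.2
    exact pointwise hμ hE0 hEμ hy2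
  calc ‖∫ y in (-E)..E, (1 / (A1 μ E y * A2 μ E y) - nm a (E^2) (y^2) / a^4)‖
      ≤ 1986 * E^8 / a^5 * |E - (-E)| :=
        intervalIntegral.norm_integral_le_of_norm_le_const hbound
    _ ≤ 3972 * μ / a^5 * ‖E^8‖ := by
        rw [Real.norm_eq_abs, abs_of_pos (by positivity : (0:ℝ) < E^8),
          abs_of_pos (by linarith : (0:ℝ) < E - (-E))]
        rw [div_mul_eq_mul_div, div_mul_eq_mul_div, div_le_div_iff₀ (by positivity) (by positivity)]
        nlinarith [mul_le_mul_of_nonneg_left hEμ (by positivity : (0:ℝ) ≤ 3972*E^8*a^5)]
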